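/- For 0 < ε < 1/2 and m ≥ 2, let u_ε(x) = −√ε (1 − x²)^{1/2+ε} on Ω = (−1,1) and ν = (1−x²)^{−2} dx. Then ∫_{{x ∈ Ω : dist(x, ∂Ω) ≤ 1/m}} u_ε(x)² dν ≥ m^{−2ε}/2; in particular, taking ε = 1/m, this quantity tends to a limit ≥ 1/2 as m → ∞ (so the uniform vanishing mass condition fails for ν). -/

import Mathlib

open Set MeasureTheory Filter intervalIntegral

lemma aux_eq {ε x : ℝ} (hε : 0 ≤ ε) (hx : x ∈ Ioo (-1:ℝ) 1) :
    (-(Real.sqrt ε * (1 - x ^ 2) ^ ((1:ℝ)/2 + ε))) ^ 2 * ((1 - x ^ 2) ^ 2)⁻¹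
      = ε * ((1 - x) ^ (2*ε - 1) * (1 + x) ^ (2*ε - 1)) := by
  obtain ⟨h1, h2⟩ := hx
  have ha : (0:ℝ) < 1 - x := by linarith
  have hb : (0:ℝ) < 1 + x := by linarith
  have ht : (0:ℝ) < 1 - x ^ 2 := by nlinarith
  have h2' : ((1 - x ^ 2) ^ ((1:ℝ)/2 + ε)) ^ 2 = (1 - x ^ 2) ^ (1 + 2*ε) := by
    rw [sq, ← Real.rpow_add ht]; ring_nf
  have h3 : (1 - x ^ 2 : ℝ) ^ (1 + 2*ε) * ((1 - x ^ 2) ^ 2)⁻¹ = (1 - x ^ 2) ^ (2*ε - 1) := by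
    rw [show ((1 - x ^ 2 : ℝ) ^ 2) = (1 - x ^ 2) ^ (2:ℝ) by
      rw [← Real.rpow_natCast (1 - x^2) 2]; norm_num,
      ← Real.rpow_neg ht.le, ← Real.rpow_add ht]
    ring_nf
  have h4 : ((1 - x ^ 2 : ℝ)) ^ (2*ε - 1) = (1 - x) ^ (2*ε - 1) * (1 + x) ^ (2*ε - 1) := by
    rw [show (1 - x ^ 2 : ℝ) = (1 - x) * (1 + x) by ring, Real.mul_rpow ha.le hb.le]
  calc (-(Real.sqrt ε * (1 - x ^ 2) ^ ((1:ℝ)/2 + ε))) ^ 2 * ((1 - x ^ 2) ^ 2)⁻¹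
      = Real.sqrt ε ^ 2 * (((1 - x ^ 2) ^ ((1:ℝ)/2 + ε)) ^ 2 * ((1 - x ^ 2) ^ 2)⁻¹) := by ring
    _ = ε * ((1 - x) ^ (2*ε - 1) * (1 + x) ^ (2*ε - 1)) := by
        rw [Real.sq_sqrt hε, h2', h3, h4]

lemma int_B {r : ℝ} (hr : -1 < r) (c : ℝ) :
    IntervalIntegrable (fun x : ℝ => (1 - x) ^ r) volume c 1 := by
  have := (intervalIntegrable_rpow' hr (a := 1 - c) (b := 0)).comp_sub_left 1
  simpa using this

lemma int_g {ε c : ℝ} (hε0 : 0 < ε) (hε2 : ε < 1/2) (hc : 0 ≤ c) (hc1 : c ≤ 1) :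
    IntervalIntegrable (fun x : ℝ => ε * ((1 - x) ^ (2*ε - 1) * (1 + x) ^ (2*ε - 1)))
      volume c 1 := by
  rw [intervalIntegrable_iff_integrableOn_Ioc_of_le hc1]
  have hB : IntegrableOn (fun x : ℝ => ε * (1 - x) ^ (2*ε - 1)) (Ioc c 1) := by
    rw [← intervalIntegrable_iff_integrableOn_Ioc_of_le hc1]
    exact (int_B (by linarith) c).const_mul ε
  apply hB.mono'
  · exact (by fun_prop : Measurable (fun x : ℝ => ε * ((1 - x) ^ (2*ε - 1) * (1 + x) ^ (2*ε - 1)))).aestronglyMeasurable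
  · rw [ae_restrict_iff' measurableSet_Ioc]
    filter_upwards with x hx
    have h1 : (0:ℝ) ≤ 1 - x := by linarith [hx.2]
    have h2 : (1:ℝ) ≤ 1 + x := by linarith [hx.1, hc]
    have h3 : (1 + x) ^ (2*ε - 1) ≤ 1 :=
      Real.rpow_le_one_of_one_le_of_nonpos h2 (by linarith)
    have h4 : (0:ℝ) ≤ (1 - x) ^ (2*ε - 1) := Real.rpow_nonneg h1 _
    have h5 : (0:ℝ) ≤ (1 + x) ^ (2*ε - 1) := Real.rpow_nonneg (by linarith) _
    rw [Real.norm_eq_abs, abs_of_nonneg (by positivity)]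
    have : (1 - x) ^ (2*ε - 1) * (1 + x) ^ (2*ε - 1) ≤ (1 - x) ^ (2*ε - 1) :=
      mul_le_of_le_one_right h4 h3
    nlinarith

lemma right_int {ε : ℝ} (hε0 : 0 < ε) (hε2 : ε < 1/2) {m : ℕ} (hm : 2 ≤ m) :
    2 ^ (2*ε - 1) * ((m:ℝ) ^ (-(2:ℝ) * ε)) / 2 ≤
      (∫ x in (1 - 1/(m:ℝ))..1, ε * ((1 - x) ^ (2*ε - 1) * (1 + x) ^ (2*ε - 1)))
    ∧ (∫ x in (1 - 1/(m:ℝ))..1, ε * ((1 - x) ^ (2*ε - 1) * (1 + x) ^ (2*ε - 1)))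
      ≤ ((m:ℝ) ^ (-(2:ℝ) * ε)) / 2 := by
  have hm1 : (1:ℝ) ≤ (m:ℝ) := by exact_mod_cast Nat.one_le_of_lt hm
  have hm0 : (0:ℝ) < (m:ℝ) := by linarith
  have hinv : 0 < 1/(m:ℝ) := by positivity
  have hinv1 : 1/(m:ℝ) ≤ 1 := by rw [div_le_one hm0]; exact hm1
  obtain ⟨c, hcdef⟩ : ∃ c : ℝ, c = 1 - 1/(m:ℝ) := ⟨_, rfl⟩
  have hc0 : 0 ≤ c := by rw [hcdef]; linarith
  have hc1 : c ≤ 1 := by rw [hcdef]; linarith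
  -- the basic integral
  have hbase : ∫ x in c..1, (1 - x) ^ (2*ε - 1) = ((m:ℝ) ^ (-(2:ℝ) * ε)) / (2*ε) := by
    have hsub : ∫ x in c..1, (1 - x) ^ (2*ε - 1) = ∫ x in (0:ℝ)..(1/(m:ℝ)), x ^ (2*ε - 1) := by
      have h := intervalIntegral.integral_comp_sub_left (a := c) (b := 1)
        (fun x : ℝ => x ^ (2*ε - 1)) 1
      rw [show (1:ℝ) - 1 = 0 by ring, show 1 - c = 1/(m:ℝ) by rw [hcdef]; ring] at h
      exact h
    have hpow : (1/(m:ℝ)) ^ (2*ε) = (m:ℝ) ^ (-(2:ℝ) * ε) := by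
      rw [one_div, ← Real.rpow_neg_one (m:ℝ), ← Real.rpow_mul hm0.le]
      congr 1; ring
    rw [hsub, integral_rpow (Or.inl (by linarith)), show (2*ε - 1 + 1) = 2*ε by ring,
      Real.zero_rpow (by linarith), hpow, sub_zero]
  have hε2' : (0:ℝ) < 2*ε := by linarith
  -- lower bound
  constructor
  · have key : ∫ x in c..1, ε * (2 ^ (2*ε - 1) * (1 - x) ^ (2*ε - 1)) ≤
        ∫ x in c..1, ε * ((1 - x) ^ (2*ε - 1) * (1 + x) ^ (2*ε - 1)) := by
      apply intervalIntegral.integral_mono_on hc1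
      · exact ((int_B (by linarith) c).const_mul _).const_mul ε
      · exact int_g hε0 hε2 hc0 hc1
      · intro x hx
        have h1 : (0:ℝ) ≤ 1 - x := by linarith [hx.2]
        have h2 : (0:ℝ) < 1 + x := by linarith [hx.1, hc0]
        have h3 : 2 ^ (2*ε - 1) ≤ (1 + x) ^ (2*ε - 1) :=
          Real.rpow_le_rpow_of_nonpos h2 (by linarith [hx.2]) (by linarith)
        have h4 : (0:ℝ) ≤ (1 - x) ^ (2*ε - 1) := Real.rpow_nonneg h1 _
        have := mul_le_mul_of_nonneg_left h3 h4
        nlinarith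
    have hval : ∫ x in c..1, ε * (2 ^ (2*ε - 1) * (1 - x) ^ (2*ε - 1))
        = 2 ^ (2*ε - 1) * ((m:ℝ) ^ (-(2:ℝ) * ε)) / 2 := by
      rw [intervalIntegral.integral_const_mul, intervalIntegral.integral_const_mul, hbase]
      field_simp
    rw [hcdef] at key hval
    linarith [key, hval.symm.le]
  · have key : ∫ x in c..1, ε * ((1 - x) ^ (2*ε - 1) * (1 + x) ^ (2*ε - 1)) ≤
        ∫ x in c..1, ε * (1 - x) ^ (2*ε - 1) := by
      apply intervalIntegral.integral_mono_on hc1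
      · exact int_g hε0 hε2 hc0 hc1
      · exact (int_B (by linarith) c).const_mul ε
      · intro x hx
        have h1 : (0:ℝ) ≤ 1 - x := by linarith [hx.2]
        have h2 : (1:ℝ) ≤ 1 + x := by linarith [hx.1, hc0]
        have h3 : (1 + x) ^ (2*ε - 1) ≤ 1 :=
          Real.rpow_le_one_of_one_le_of_nonpos h2 (by linarith)
        have h4 : (0:ℝ) ≤ (1 - x) ^ (2*ε - 1) := Real.rpow_nonneg h1 _
        have := mul_le_of_le_one_right h4 h3
        nlinarith
    have hval : ∫ x in c..1, ε * (1 - x) ^ (2*ε - 1) = ((m:ℝ) ^ (-(2:ℝ) * ε)) / 2 := by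
      rw [intervalIntegral.integral_const_mul, hbase]
      field_simp
    rw [hcdef] at key hval
    linarith [key, hval.le]

lemma key {ε : ℝ} (hε0 : 0 < ε) (hε2 : ε < 1/2) {m : ℕ} (hm : 2 ≤ m) :
    ((m:ℝ) ^ (-(2:ℝ) * ε)) / 2 ≤
      (∫ x in {x : ℝ | x ∈ Ioo (-1:ℝ) 1 ∧ 1 - |x| ≤ 1 / (m:ℝ)},
        (-(Real.sqrt ε * (1 - x ^ 2) ^ ((1:ℝ)/2 + ε))) ^ 2 * ((1 - x ^ 2) ^ 2)⁻¹)
    ∧ (∫ x in {x : ℝ | x ∈ Ioo (-1:ℝ) 1 ∧ 1 - |x| ≤ 1 / (m:ℝ)},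
        (-(Real.sqrt ε * (1 - x ^ 2) ^ ((1:ℝ)/2 + ε))) ^ 2 * ((1 - x ^ 2) ^ 2)⁻¹) ≤ 1 := by
  have hm2 : (2:ℝ) ≤ (m:ℝ) := by exact_mod_cast hm
  have hm0 : (0:ℝ) < (m:ℝ) := by linarith
  have hinv : (0:ℝ) < 1/(m:ℝ) := by positivity
  have hinvh : (1:ℝ)/(m:ℝ) ≤ 1/2 := by
    rw [div_le_div_iff₀ hm0 two_pos]; linarith
  obtain ⟨c, hcdef⟩ : ∃ c : ℝ, c = 1 - 1/(m:ℝ) := ⟨_, rfl⟩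
  have hch : (1:ℝ)/2 ≤ c := by rw [hcdef]; linarith
  have hc1 : c < 1 := by rw [hcdef]; linarith
  set g : ℝ → ℝ := fun x => ε * ((1 - x) ^ (2*ε - 1) * (1 + x) ^ (2*ε - 1)) with hgdef
  have hSeq : {x : ℝ | x ∈ Ioo (-1:ℝ) 1 ∧ 1 - |x| ≤ 1 / (m:ℝ)}
      = Ioc (-1) (-c) ∪ Ico c 1 := by
    ext x
    simp only [mem_setOf_eq, mem_Ioo, mem_union, mem_Ioc, mem_Ico]
    constructor
    · rintro ⟨⟨h1, h2⟩, h3⟩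
      rcases le_total 0 x with hx | hx
      · right; rw [abs_of_nonneg hx] at h3; exact ⟨by linarith, h2⟩
      · left; rw [abs_of_nonpos hx] at h3; exact ⟨h1, by linarith⟩
    · rintro (⟨h1, h2⟩ | ⟨h1, h2⟩)
      · have hx : x ≤ 0 := by linarith
        refine ⟨⟨h1, by linarith⟩, ?_⟩; rw [abs_of_nonpos hx]; linarith
      · have hx : 0 ≤ x := by linarith
        refine ⟨⟨by linarith, h2⟩, ?_⟩; rw [abs_of_nonneg hx]; linarith
  have hII : IntervalIntegrable g volume c 1 := int_g hε0 hε2 (by linarith) hc1.le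
  have h3 : (fun x => g (-x)) = g := by
    funext x; rw [hgdef]; simp only []; ring_nf
  have hIIneg : IntervalIntegrable g volume (-1) (-c) := by
    have h1 : IntervalIntegrable (fun x => g (-x)) volume (-c) (-1) :=
      (IntervalIntegrable.iff_comp_neg (by simp)).mp hII
    rw [h3] at h1; exact h1.symm
  have hIOc : IntegrableOn g (Ioc (-1) (-c)) :=
    (intervalIntegrable_iff_integrableOn_Ioc_of_le (by linarith)).mp hIIneg
  have hICo : IntegrableOn g (Ico c 1) :=
    ((intervalIntegrable_iff_integrableOn_Ioc_of_le hc1.le).mp hII).congr_set_ae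
      Ico_ae_eq_Ioc
  have hre : ∫ x in Ico c 1, g x = ∫ x in c..1, g x := by
    rw [intervalIntegral.integral_of_le hc1.le]
    exact setIntegral_congr_set Ico_ae_eq_Ioc
  have hle : ∫ x in Ioc (-1) (-c), g x = ∫ x in c..1, g x := by
    have h1 : ∫ x in Ioc (-1) (-c), g x = ∫ x in (-1)..(-c), g x :=
      (intervalIntegral.integral_of_le (by linarith)).symm
    have h4 := intervalIntegral.integral_comp_neg (a := -1) (b := -c) g
    rw [h3, neg_neg] at h4
    rw [h1, h4, neg_neg]
  obtain ⟨hlow, hup⟩ := right_int hε0 hε2 hm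
  rw [← hcdef] at hlow hup
  have hcongr : ∫ x in {x : ℝ | x ∈ Ioo (-1:ℝ) 1 ∧ 1 - |x| ≤ 1 / (m:ℝ)},
        (-(Real.sqrt ε * (1 - x ^ 2) ^ ((1:ℝ)/2 + ε))) ^ 2 * ((1 - x ^ 2) ^ 2)⁻¹
      = ∫ x in Ioc (-1) (-c) ∪ Ico c 1, g x := by
    rw [hSeq]
    apply setIntegral_congr_fun (by measurability)
    intro x hx
    have hx' : x ∈ Ioo (-1:ℝ) 1 := by
      rcases hx with h | h
      · exact ⟨h.1, by rcases h with ⟨_, h2⟩; linarith⟩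
      · exact ⟨by rcases h with ⟨h1, _⟩; linarith, h.2⟩
    exact aux_eq hε0.le hx'
  have hunion : ∫ x in Ioc (-1) (-c) ∪ Ico c 1, g x
      = (∫ x in Ioc (-1) (-c), g x) + ∫ x in Ico c 1, g x := by
    apply setIntegral_union _ measurableSet_Ico hIOc hICo
    rw [Set.disjoint_left]
    rintro x ⟨_, h2⟩ ⟨h3, _⟩; linarith
  rw [hcongr, hunion, hre, hle]
  have hpow : (1:ℝ)/2 ≤ 2 ^ (2*ε - 1) := by
    have := Real.rpow_le_rpow_of_exponent_le (by norm_num : (1:ℝ) ≤ 2)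
      (by linarith : (-1:ℝ) ≤ 2*ε - 1)
    rwa [Real.rpow_neg_one, show ((2:ℝ))⁻¹ = 1/2 by norm_num] at this
  have hM0 : (0:ℝ) ≤ (m:ℝ) ^ (-(2:ℝ) * ε) := Real.rpow_nonneg hm0.le _
  have hM1 : (m:ℝ) ^ (-(2:ℝ) * ε) ≤ 1 :=
    Real.rpow_le_one_of_one_le_of_nonpos (by linarith) (by linarith)
  constructor
  · nlinarith
  · nlinarith

theorem stmt_10 (u : ℝ → ℝ → ℝ)
    (hu : u = fun (ε : ℝ) (x : ℝ) => -(Real.sqrt ε * (1 - x ^ 2) ^ ((1:ℝ)/2 + ε))) :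
    (∀ ε ∈ Ioo (0:ℝ) (1/2), ∀ m : ℕ, 2 ≤ m →
      ((m : ℝ) ^ (-(2:ℝ) * ε)) / 2 ≤
        ∫ x in {x : ℝ | x ∈ Ioo (-1:ℝ) 1 ∧ 1 - |x| ≤ 1 / (m : ℝ)},
          (u ε x) ^ 2 * ((1 - x ^ 2) ^ 2)⁻¹) ∧
    (1:ℝ)/2 ≤ liminf (fun m : ℕ =>
        ∫ x in {x : ℝ | x ∈ Ioo (-1:ℝ) 1 ∧ 1 - |x| ≤ 1 / (m : ℝ)},
          (u (1 / (m : ℝ)) x) ^ 2 * ((1 - x ^ 2) ^ 2)⁻¹) atTop := by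
  subst hu
  constructor
  · rintro ε ⟨hε0, hε2⟩ m hm
    exact (key hε0 hε2 hm).1
  · set F : ℕ → ℝ := fun m =>
      ∫ x in {x : ℝ | x ∈ Ioo (-1:ℝ) 1 ∧ 1 - |x| ≤ 1 / (m : ℝ)},
        ((fun (ε : ℝ) (x : ℝ) => -(Real.sqrt ε * (1 - x ^ 2) ^ ((1:ℝ)/2 + ε))) (1 / (m:ℝ)) x) ^ 2
          * ((1 - x ^ 2) ^ 2)⁻¹ with hF
    set G : ℕ → ℝ := fun m => ((m:ℝ) ^ (-(2:ℝ) * (1/(m:ℝ)))) / 2 with hG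
    have h2 : Tendsto (fun m : ℕ => (m:ℝ) ^ ((-1:ℝ)/(m:ℝ))) atTop (nhds 1) :=
      tendsto_rpow_neg_div.comp tendsto_natCast_atTop_atTop
    have h3 : Tendsto (fun m : ℕ => ((m:ℝ) ^ ((-1:ℝ)/(m:ℝ)) * (m:ℝ) ^ ((-1:ℝ)/(m:ℝ))) / 2)
        atTop (nhds ((1 * 1) / 2)) := (h2.mul h2).div_const 2
    have hGt : Tendsto G atTop (nhds (1/2)) := by
      have hGeq : ∀ᶠ m : ℕ in atTop,
          ((m:ℝ) ^ ((-1:ℝ)/(m:ℝ)) * (m:ℝ) ^ ((-1:ℝ)/(m:ℝ))) / 2 = G m := by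
        filter_upwards [eventually_ge_atTop 1] with m hm
        have hm0 : (0:ℝ) < (m:ℝ) := by exact_mod_cast Nat.lt_of_lt_of_le Nat.zero_lt_one hm
        rw [hG]
        simp only []
        rw [← Real.rpow_add hm0]
        congr 2
        field_simp
        ring
      have heq : ((1:ℝ) * 1) / 2 = 1/2 := by norm_num
      rw [heq] at h3
      exact Tendsto.congr' hGeq h3
    have hev : ∀ᶠ m : ℕ in atTop, G m ≤ F m := by
      filter_upwards [eventually_ge_atTop 3] with m hm
      have hm3 : (3:ℝ) ≤ (m:ℝ) := by exact_mod_cast hm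
      have hε0 : (0:ℝ) < 1/(m:ℝ) := by positivity
      have hε2 : (1:ℝ)/(m:ℝ) < 1/2 := by
        rw [div_lt_div_iff₀ (by linarith) two_pos]; linarith
      exact (key hε0 hε2 (by omega)).1
    have hub : ∀ᶠ m : ℕ in atTop, F m ≤ 1 := by
      filter_upwards [eventually_ge_atTop 3] with m hm
      have hm3 : (3:ℝ) ≤ (m:ℝ) := by exact_mod_cast hm
      have hε0 : (0:ℝ) < 1/(m:ℝ) := by positivity
      have hε2 : (1:ℝ)/(m:ℝ) < 1/2 := by
        rw [div_lt_div_iff₀ (by linarith) two_pos]; linarith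
      exact (key hε0 hε2 (by omega)).2
    have hcb : IsCoboundedUnder (· ≥ ·) atTop F :=
      isCoboundedUnder_ge_of_eventually_le atTop hub
    have hbd : IsBoundedUnder (· ≥ ·) atTop G :=
      ⟨0, eventually_map.mpr (Eventually.of_forall fun m => by
        have : (0:ℝ) ≤ (m:ℝ) ^ (-(2:ℝ) * (1/(m:ℝ))) := Real.rpow_nonneg (Nat.cast_nonneg m) _
        rw [hG]; simp only []; linarith)⟩
    calc (1:ℝ)/2 = liminf G atTop := hGt.liminf_eq.symm
      _ ≤ liminf F atTop := liminf_le_liminf hev hbd hcb
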